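/- Let L be a mixed integer split polyhedron with V^in(L) ≠ ∅. Every vertex of R(L,P) = conv({x ∈ P : x ∉ int(L)}) is of one of the following forms: (i) a vertex v^k with k ∈ V^out(L); (ii) v^i + β_{i,k}(L)(v^k − v^i) with i ∈ V^in(L), k ∈ V^out(L); (iii) v^i + α_{i,j}(L) r^j with i ∈ V^in(L) and j ∈ E with α_{i,j}(L) < ∞. Consequently, R(L,P) = conv(∪_{i ∈ V^in(L)} R(L, P(e^i))), where P(e^i) is the subcone conv({v^i} ∪ {v^k}_{k∈V^out(L)}) + cone({r^j}_{j∈E}). -/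

import Mathlib

open Pointwise

/-- `S ⊆ ℝ^n` is a polyhedron: a finite intersection of halfspaces. -/
def IsPolyhedron {n : ℕ} (S : Set (Fin n → ℝ)) : Prop :=
  ∃ (m : ℕ) (A : Fin m → Fin n → ℝ) (b : Fin m → ℝ),
    S = {x | ∀ i, ∑ j, A i j * x j ≤ b i}

namespace Stmt13Aux

variable {n : ℕ} {E : Type*} [Fintype E]

def coneSet (r : E → Fin n → ℝ) : Set (Fin n → ℝ) :=
  {d | ∃ μ : E → ℝ, (∀ j, 0 ≤ μ j) ∧ d = ∑ j, μ j • r j}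

lemma zero_mem_coneSet (r : E → Fin n → ℝ) : 0 ∈ coneSet r :=
  ⟨0, fun _ => le_refl 0, by simp⟩

lemma coneSet_add {r : E → Fin n → ℝ} {a b : Fin n → ℝ} (ha : a ∈ coneSet r)
    (hb : b ∈ coneSet r) : a + b ∈ coneSet r := by
  obtain ⟨μ, hμ, rfl⟩ := ha
  obtain ⟨ν, hν, rfl⟩ := hb
  exact ⟨μ + ν, fun j => add_nonneg (hμ j) (hν j), by
    simp [add_smul, Finset.sum_add_distrib]⟩

lemma coneSet_smul {r : E → Fin n → ℝ} {a : Fin n → ℝ} {c : ℝ} (hc : 0 ≤ c)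
    (ha : a ∈ coneSet r) : c • a ∈ coneSet r := by
  obtain ⟨μ, hμ, rfl⟩ := ha
  exact ⟨c • μ, fun j => mul_nonneg hc (hμ j), by
    simp [Finset.smul_sum, smul_smul]⟩

lemma single_mem_coneSet (r : E → Fin n → ℝ) (j : E) : r j ∈ coneSet r := by
  classical
  refine ⟨fun j' => if j' = j then 1 else 0, fun j' => by positivity, ?_⟩
  simp [ite_smul]

lemma convex_coneSet (r : E → Fin n → ℝ) : Convex ℝ (coneSet r) := by
  intro a ha b hb s t hs ht _
  exact coneSet_add (coneSet_smul hs ha) (coneSet_smul ht hb)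

/-- membership in convexHull of a finite range -/
lemma mem_hull_range_iff {V : Type*} [Fintype V] (v : V → Fin n → ℝ) (y : Fin n → ℝ) :
    y ∈ convexHull ℝ (Set.range v) ↔
      ∃ w : V → ℝ, (∀ i, 0 ≤ w i) ∧ ∑ i, w i = 1 ∧ y = ∑ i, w i • v i := by
  constructor
  · intro hy
    have : convexHull ℝ (Set.range v) ⊆
        {y | ∃ w : V → ℝ, (∀ i, 0 ≤ w i) ∧ ∑ i, w i = 1 ∧ y = ∑ i, w i • v i} := by
      apply convexHull_min
      · rintro _ ⟨i, rfl⟩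
        classical
        refine ⟨fun i' => if i' = i then 1 else 0, fun i' => by positivity, by simp, by
          simp [ite_smul]⟩
      · rintro a ⟨wa, hwa, hsa, rfl⟩ b ⟨wb, hwb, hsb, rfl⟩ s t hs ht hst
        refine ⟨fun i => s * wa i + t * wb i,
          fun i => add_nonneg (mul_nonneg hs (hwa i)) (mul_nonneg ht (hwb i)), ?_, ?_⟩
        · simp only [Finset.sum_add_distrib, ← Finset.mul_sum, hsa, hsb, mul_one, hst]
        · simp [add_smul, Finset.sum_add_distrib, Finset.smul_sum, smul_smul]
    exact this hy
  · rintro ⟨w, hw, hsw, rfl⟩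
    exact (convex_convexHull ℝ _).sum_mem (fun i _ => hw i) hsw
      (fun i _ => subset_convexHull ℝ _ ⟨i, rfl⟩)


-- section B
section PolyFacts

variable {n m : ℕ} (A : Fin m → Fin n → ℝ) (b : Fin m → ℝ)

lemma cont_row (i : Fin m) : Continuous fun x : Fin n → ℝ => ∑ j, A i j * x j :=
  continuous_finset_sum _ fun j _ => continuous_const.mul (continuous_apply j)

lemma convex_poly : Convex ℝ {x : Fin n → ℝ | ∀ i, ∑ j, A i j * x j ≤ b i} := by
  intro x hx y hy s t hs ht hst i
  have : ∑ j, A i j * (s • x + t • y) j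
      = s * (∑ j, A i j * x j) + t * (∑ j, A i j * y j) := by
    simp only [Pi.add_apply, Pi.smul_apply, smul_eq_mul, Finset.mul_sum,
      ← Finset.sum_add_distrib]
    exact Finset.sum_congr rfl fun j _ => by ring
  rw [this]
  calc s * (∑ j, A i j * x j) + t * (∑ j, A i j * y j)
      ≤ s * b i + t * b i := by
        gcongr
        exacts [hx i, hy i]
    _ = b i := by rw [← add_mul, hst, one_mul]

lemma closed_poly : IsClosed {x : Fin n → ℝ | ∀ i, ∑ j, A i j * x j ≤ b i} := by
  have : {x : Fin n → ℝ | ∀ i, ∑ j, A i j * x j ≤ b i}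
      = ⋂ i, {x | ∑ j, A i j * x j ≤ b i} := by ext x; simp
  rw [this]
  exact isClosed_iInter fun i => isClosed_le (cont_row A i) continuous_const

lemma row_affine (i : Fin m) (x w : Fin n → ℝ) (θ : ℝ) :
    ∑ j, A i j * (x + θ • w) j = (∑ j, A i j * x j) + θ * ∑ j, A i j * w j := by
  simp only [Pi.add_apply, Pi.smul_apply, smul_eq_mul, Finset.mul_sum,
    ← Finset.sum_add_distrib]
  exact Finset.sum_congr rfl fun j _ => by ring

lemma mem_interior_poly {x : Fin n → ℝ}
    (hx : x ∈ {x : Fin n → ℝ | ∀ i, ∑ j, A i j * x j ≤ b i})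
    (hs : ∀ i, A i ≠ 0 → ∑ j, A i j * x j < b i) :
    x ∈ interior {x : Fin n → ℝ | ∀ i, ∑ j, A i j * x j ≤ b i} := by
  rw [mem_interior]
  refine ⟨⋂ i, {y | A i ≠ 0 → ∑ j, A i j * y j < b i}, ?_, ?_, ?_⟩
  · intro y hy i
    simp only [Set.mem_iInter, Set.mem_setOf_eq] at hy
    by_cases h : A i = 0
    · have : ∑ j, A i j * y j = 0 := by
        simp [h]
      rw [this]
      have : ∑ j, A i j * x j = 0 := by simp [h]
      calc (0:ℝ) = ∑ j, A i j * x j := this.symm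
        _ ≤ b i := hx i
    · exact (hy i h).le
  · exact isOpen_iInter_of_finite fun i => by
      by_cases h : A i = 0
      · simp only [h, ne_eq, not_true_eq_false, false_implies, Set.setOf_true]
        exact isOpen_univ
      · simp only [ne_eq, h, not_false_eq_true, true_implies]
        exact isOpen_lt (cont_row A i) continuous_const
  · simp only [Set.mem_iInter, Set.mem_setOf_eq]
    exact fun i h => hs i h

lemma boundary_row {x : Fin n → ℝ}
    (hx : x ∈ {x : Fin n → ℝ | ∀ i, ∑ j, A i j * x j ≤ b i})
    (hnx : x ∉ interior {x : Fin n → ℝ | ∀ i, ∑ j, A i j * x j ≤ b i}) :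
    ∃ i, A i ≠ 0 ∧ ∑ j, A i j * x j = b i := by
  by_contra h
  push_neg at h
  exact hnx (mem_interior_poly A b hx fun i hi => lt_of_le_of_ne (hx i) (h i hi))

lemma rows_nonneg_of_ray {x w : Fin n → ℝ}
    (hx : ∀ θ : ℝ, θ < 0 → x + θ • w ∈ {x : Fin n → ℝ | ∀ i, ∑ j, A i j * x j ≤ b i}) :
    ∀ i, 0 ≤ ∑ j, A i j * w j := by
  intro i
  by_contra h
  push_neg at h
  have hx0 : ∑ j, A i j * x j ≤ b i := by
    have h1 := hx (-1) (by norm_num) i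
    have h2 := hx (-(1/2)) (by norm_num) i
    rw [row_affine] at h1 h2
    nlinarith
  set c := ∑ j, A i j * w j with hc
  have hθ : (b i + 1 - ∑ j, A i j * x j) / c < 0 := by
    apply div_neg_of_pos_of_neg
    · linarith
    · exact h
  have := hx _ hθ i
  rw [row_affine] at this
  rw [div_mul_cancel₀] at this
  · linarith
  · exact ne_of_lt h

lemma recession_mem {x w : Fin n → ℝ} (hw : ∀ i, ∑ j, A i j * w j ≤ 0)
    (hx : x ∈ {x : Fin n → ℝ | ∀ i, ∑ j, A i j * x j ≤ b i}) (s : ℝ) (hs : 0 ≤ s) :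
    x + s • w ∈ {x : Fin n → ℝ | ∀ i, ∑ j, A i j * x j ≤ b i} := by
  intro i
  rw [row_affine]
  have h1 : ∑ j, A i j * x j ≤ b i := hx i
  nlinarith [mul_nonpos_of_nonneg_of_nonpos hs (hw i)]

lemma interior_add_mem {L : Set (Fin n → ℝ)} {u : Fin n → ℝ}
    (hrec : ∀ y ∈ L, y + u ∈ L) {x : Fin n → ℝ} (hx : x ∈ interior L) :
    x + u ∈ interior L := by
  rw [mem_interior] at hx ⊢
  obtain ⟨U, hUL, hUo, hxU⟩ := hx
  refine ⟨(fun y => y - u) ⁻¹' U, ?_, hUo.preimage (continuous_id.sub continuous_const), ?_⟩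
  · intro y hy
    have := hrec _ (hUL hy)
    simpa using this
  · simp [hxU]

end PolyFacts

-- section C
def hullCone (r : E → Fin n → ℝ) (s : Set (Fin n → ℝ)) : Set (Fin n → ℝ) :=
  convexHull ℝ s + coneSet r


lemma convex_hullCone (r : E → Fin n → ℝ) (s : Set (Fin n → ℝ)) :
    Convex ℝ (hullCone r s) :=
  (convex_convexHull ℝ s).add (convex_coneSet r)

lemma hullCone_mono (r : E → Fin n → ℝ) {s s' : Set (Fin n → ℝ)} (h : s ⊆ s') :
    hullCone r s ⊆ hullCone r s' :=
  Set.add_subset_add_right (convexHull_mono h)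

lemma mem_hullCone {r : E → Fin n → ℝ} {s : Set (Fin n → ℝ)} {a c : Fin n → ℝ}
    (ha : a ∈ convexHull ℝ s) (hc : c ∈ coneSet r) : a + c ∈ hullCone r s :=
  Set.add_mem_add ha hc

lemma hullCone_add_cone {r : E → Fin n → ℝ} {s : Set (Fin n → ℝ)} {y c : Fin n → ℝ}
    (hy : y ∈ hullCone r s) (hc : c ∈ coneSet r) : y + c ∈ hullCone r s := by
  obtain ⟨a, ha, d, hd, rfl⟩ := hy
  rw [add_assoc]
  exact mem_hullCone ha (coneSet_add hd hc)

lemma point_mem_hullCone {r : E → Fin n → ℝ} {s : Set (Fin n → ℝ)} {x : Fin n → ℝ}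
    (hx : x ∈ s) : x ∈ hullCone r s := by
  have := mem_hullCone (subset_convexHull ℝ s hx) (zero_mem_coneSet r)
  simpa using this

lemma exit_segment {L : Set (Fin n → ℝ)} {p0 p1 : Fin n → ℝ}
    (h0 : p0 ∈ interior L) (h1 : p1 ∉ interior L) :
    ∃ τ : ℝ, 0 < τ ∧ τ ≤ 1 ∧ p0 + τ • (p1 - p0) ∉ interior L ∧
      ∀ u, 0 ≤ u → u < τ → p0 + u • (p1 - p0) ∈ interior L := by
  have hcont : Continuous fun t : ℝ => p0 + t • (p1 - p0) :=
    continuous_const.add (continuous_id.smul continuous_const)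
  set D := Set.Icc (0:ℝ) 1 ∩ {t : ℝ | p0 + t • (p1 - p0) ∉ interior L} with hD
  have hclosed : IsClosed D :=
    isClosed_Icc.inter (IsClosed.preimage hcont isOpen_interior.isClosed_compl)
  have hne : D.Nonempty := ⟨1, by simp, by simpa using h1⟩
  have hbdd : BddBelow D := ⟨0, fun t ht => ht.1.1⟩
  set τ := sInf D with hτ
  have hmem : τ ∈ D := hclosed.csInf_mem hne hbdd
  have hτpos : 0 < τ := by
    rcases lt_or_eq_of_le hmem.1.1 with h | h
    · exact h
    · exfalso
      apply hmem.2
      simpa [← h] using h0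
  refine ⟨τ, hτpos, hmem.1.2, hmem.2, fun u hu huτ => ?_⟩
  by_contra hcon
  have : u ∈ D := ⟨⟨hu, le_trans huτ.le hmem.1.2⟩, hcon⟩
  exact absurd (csInf_le hbdd this) (not_le.mpr huτ)

lemma exit_ray {L : Set (Fin n → ℝ)} {p0 c : Fin n → ℝ}
    (h0 : p0 ∈ interior L) (hne : ∃ t : ℝ, 0 ≤ t ∧ p0 + t • c ∉ interior L) :
    ∃ α : ℝ, 0 < α ∧ p0 + α • c ∉ interior L ∧
      ∀ u, 0 ≤ u → u < α → p0 + u • c ∈ interior L := by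
  have hcont : Continuous fun t : ℝ => p0 + t • c :=
    continuous_const.add (continuous_id.smul continuous_const)
  obtain ⟨t0, ht0, ht0n⟩ := hne
  set D := Set.Ici (0:ℝ) ∩ {t : ℝ | p0 + t • c ∉ interior L} with hD
  have hclosed : IsClosed D :=
    isClosed_Ici.inter (IsClosed.preimage hcont isOpen_interior.isClosed_compl)
  have hne' : D.Nonempty := ⟨t0, ht0, ht0n⟩
  have hbdd : BddBelow D := ⟨0, fun t ht => ht.1⟩
  set α := sInf D with hα
  have hmem : α ∈ D := hclosed.csInf_mem hne' hbdd
  have hαpos : 0 < α := by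
    rcases lt_or_eq_of_le (show (0:ℝ) ≤ α from hmem.1) with h | h
    · exact h
    · exfalso
      apply hmem.2
      simpa [← h] using h0
  refine ⟨α, hαpos, hmem.2, fun u hu huα => ?_⟩
  by_contra hcon
  exact absurd (csInf_le hbdd ⟨hu, hcon⟩) (not_le.mpr huα)

lemma ray_beyond {L : Set (Fin n → ℝ)} (hL : Convex ℝ L) {p0 c : Fin n → ℝ}
    (h0 : p0 ∈ interior L) {α : ℝ} (hα : 0 < α) (hαn : p0 + α • c ∉ interior L)
    {t : ℝ} (ht : α ≤ t) : p0 + t • c ∉ interior L := by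
  intro hmem
  apply hαn
  have htpos : 0 < t := lt_of_lt_of_le hα ht
  have key : p0 + α • c = (1 - α / t) • p0 + (α / t) • (p0 + t • c) := by
    have : (α / t) * t = α := div_mul_cancel₀ α (ne_of_gt htpos)
    rw [smul_add, smul_smul, this]
    module
  rw [key]
  exact hL.interior (by exact h0) hmem
    (sub_nonneg.mpr ((div_le_one htpos).mpr ht)) (by positivity) (by ring)

section MainM
variable {n : ℕ} {V E : Type*} [Fintype V] [Fintype E]

lemma mem_hull_union (v : V → Fin n → ℝ) (r : E → Fin n → ℝ) {L : Set (Fin n → ℝ)}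
    (hLc : Convex ℝ L) (hVin : ∃ i, v i ∈ interior L)
    {y : Fin n → ℝ}
    (lam : V → ℝ) (mu : E → ℝ) (hlam : ∀ i, 0 ≤ lam i) (hmu : ∀ j, 0 ≤ mu j)
    (hsum : ∑ i, lam i = 1) (hy : y = ∑ i, lam i • v i + ∑ j, mu j • r j)
    (hyL : y ∉ interior L) :
    y ∈ convexHull ℝ (⋃ i ∈ {i : V | v i ∈ interior L},
      {p ∈ hullCone r (insert (v i) (v '' {k | v k ∉ interior L})) | p ∉ interior L}) := by
  classical
  obtain ⟨i0, hi0⟩ := hVin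
  set Out : Set V := {k | v k ∉ interior L} with hOut
  set Si : V → Set (Fin n → ℝ) :=
    fun i => {p ∈ hullCone r (insert (v i) (v '' Out)) | p ∉ interior L} with hSi
  set H : Set (Fin n → ℝ) :=
    convexHull ℝ (⋃ i ∈ {i : V | v i ∈ interior L}, Si i) with hH
  have hSiH : ∀ i, v i ∈ interior L → Si i ⊆ H := fun i hi =>
    (Set.subset_biUnion_of_mem (show i ∈ {i : V | v i ∈ interior L} from hi)).trans
      (subset_convexHull ℝ _)
  set InF : Finset V := Finset.univ.filter (fun i => v i ∈ interior L) with hInF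
  set OutF : Finset V := Finset.univ.filter (fun i => ¬ (v i ∈ interior L)) with hOutF
  set suppF : Finset V := InF.filter (fun i => 0 < lam i) with hsuppF
  have hsuppIn : ∀ i ∈ suppF, v i ∈ interior L := fun i hi => by
    have := (Finset.mem_filter.mp hi).1
    exact (Finset.mem_filter.mp this).2
  have hsupppos : ∀ i ∈ suppF, 0 < lam i := fun i hi => (Finset.mem_filter.mp hi).2
  have hsplitv : ∑ i, lam i • v i = ∑ i ∈ InF, lam i • v i + ∑ i ∈ OutF, lam i • v i :=
    (Finset.sum_filter_add_sum_filter_not Finset.univ _ _).symm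
  have hsplits : ∑ i ∈ InF, lam i + ∑ i ∈ OutF, lam i = 1 := by
    rw [Finset.sum_filter_add_sum_filter_not]; exact hsum
  set s : ℝ := ∑ i ∈ InF, lam i with hs
  set s2 : ℝ := ∑ i ∈ OutF, lam i with hs2
  have hsnn : 0 ≤ s := Finset.sum_nonneg fun i _ => hlam i
  have hs2nn : 0 ≤ s2 := Finset.sum_nonneg fun i _ => hlam i
  have hInsupp : ∑ i ∈ InF, lam i • v i = ∑ i ∈ suppF, lam i • v i := by
    refine (Finset.sum_subset (Finset.filter_subset _ _) ?_).symm
    intro i hiIn hins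
    have h1 : ¬ 0 < lam i := fun hpos => hins (Finset.mem_filter.mpr ⟨hiIn, hpos⟩)
    have : lam i = 0 := le_antisymm (not_lt.mp h1) (hlam i)
    simp [this]
  have hInsupps : s = ∑ i ∈ suppF, lam i := by
    rw [hs]
    refine (Finset.sum_subset (Finset.filter_subset _ _) ?_).symm
    intro i hiIn hins
    have h1 : ¬ 0 < lam i := fun hpos => hins (Finset.mem_filter.mpr ⟨hiIn, hpos⟩)
    exact le_antisymm (not_lt.mp h1) (hlam i)
  have houtmem : ∀ (i' : V) (w : V → ℝ), (∀ i ∈ OutF, 0 ≤ w i) → (∑ i ∈ OutF, w i = 1) →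
      ∑ i ∈ OutF, w i • v i ∈ convexHull ℝ (insert (v i') (v '' Out)) := by
    intro i' w hw hw1
    apply (convex_convexHull ℝ _).sum_mem hw hw1
    intro i hi
    apply subset_convexHull
    refine Set.mem_insert_iff.mpr (Or.inr ⟨i, ?_, rfl⟩)
    exact (Finset.mem_filter.mp hi).2
  by_cases hs0 : s = 0
  -- CASE A : no interior mass
  · have hlamIn : ∀ i ∈ InF, lam i = 0 := by
      intro i hi
      exact (Finset.sum_eq_zero_iff_of_nonneg (fun i _ => hlam i)).mp hs0 i hi
    have hs21 : s2 = 1 := by linarith [hsplits]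
    have hyPi : y ∈ hullCone r (insert (v i0) (v '' Out)) := by
      have h1 : ∑ i ∈ InF, lam i • v i = 0 :=
        Finset.sum_eq_zero fun i hi => by simp [hlamIn i hi]
      have hyy : y = ∑ i ∈ OutF, lam i • v i + ∑ j, mu j • r j := by
        rw [hy, hsplitv, h1, zero_add]
      rw [hyy]
      exact mem_hullCone (houtmem i0 lam (fun i _ => hlam i) (by rw [← hs2, hs21]))
        ⟨mu, hmu, rfl⟩
    exact subset_convexHull ℝ _ (Set.mem_biUnion hi0 ⟨hyPi, hyL⟩)
  have hspos : 0 < s := lt_of_le_of_ne hsnn (Ne.symm hs0)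
  have hsuppne : suppF.Nonempty := by
    rw [Finset.nonempty_iff_ne_empty]
    intro hemp
    rw [hInsupps, hemp, Finset.sum_empty] at hspos
    exact lt_irrefl 0 hspos
  by_cases hs20 : s2 = 0
  -- CASE B : ray case, s = 1
  · set c : Fin n → ℝ := ∑ j, mu j • r j with hc
    have hcC : c ∈ coneSet r := ⟨mu, hmu, rfl⟩
    have hlamOut : ∀ i ∈ OutF, lam i = 0 := fun i hi =>
      (Finset.sum_eq_zero_iff_of_nonneg (fun i _ => hlam i)).mp hs20 i hi
    have hs1 : s = 1 := by linarith [hsplits]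
    have hyy : y = ∑ i ∈ suppF, lam i • v i + c := by
      rw [hy, hsplitv, ← hInsupp]
      have h2 : ∑ i ∈ OutF, lam i • v i = 0 :=
        Finset.sum_eq_zero fun i hi => by simp [hlamOut i hi]
      rw [h2, add_zero]
    have hssupp : ∑ i ∈ suppF, lam i = 1 := by rw [← hInsupps, hs1]
    have hcombo : ∀ u : V → ℝ, (∑ i ∈ suppF, lam i * u i = 1) →
        y = ∑ i ∈ suppF, lam i • (v i + u i • c) := by
      intro u hu
      have h3 : ∑ i ∈ suppF, lam i • (v i + u i • c)
          = ∑ i ∈ suppF, lam i • v i + (∑ i ∈ suppF, lam i * u i) • c := by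
        rw [Finset.sum_smul, ← Finset.sum_add_distrib]
        exact Finset.sum_congr rfl fun i _ => by rw [smul_add, smul_smul]
      rw [h3, hu, one_smul, hyy]
    have hAll : ∀ i ∈ suppF, ∃ t : ℝ, 0 ≤ t ∧ v i + t • c ∉ interior L := by
      by_contra hcon
      push_neg at hcon
      obtain ⟨i', hi', hall⟩ := hcon
      have hupos : 0 < lam i' := hsupppos i' hi'
      set u : V → ℝ := fun i => if i = i' then (lam i')⁻¹ else 0 with hu
      have hsum1 : ∑ i ∈ suppF, lam i * u i = 1 := by
        have h4 : ∀ i ∈ suppF, lam i * u i = if i = i' then 1 else 0 := by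
          intro i hi
          by_cases h : i = i'
          · subst h; simp [hu, mul_inv_cancel₀ (ne_of_gt (hsupppos i hi))]
          · simp [hu, h]
        rw [Finset.sum_congr rfl h4, Finset.sum_ite_eq' suppF i' (fun _ => (1:ℝ)),
          if_pos hi']
      apply hyL
      rw [hcombo u hsum1]
      apply (hLc.interior).sum_mem (fun i hi => (hlam i)) hssupp
      intro i hi
      by_cases h : i = i'
      · subst h
        exact hall _ (by positivity)
      · have : u i = 0 := by simp [hu, h]
        rw [this]
        simpa using hsuppIn i hi
    have hAllx : ∀ i ∈ suppF, ∃ α : ℝ, 0 < α ∧ v i + α • c ∉ interior L ∧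
        ∀ u', 0 ≤ u' → u' < α → v i + u' • c ∈ interior L :=
      fun i hi => exit_ray (hsuppIn i hi) (hAll i hi)
    choose! α hα1 hα2 hα3 using hAllx
    set T : ℝ := ∑ i ∈ suppF, lam i * α i with hT
    have hT1 : T ≤ 1 := by
      by_contra hcon
      push_neg at hcon
      have hTpos : 0 < T := lt_trans one_pos hcon
      set u : V → ℝ := fun i => α i / T with hu
      have hsum1 : ∑ i ∈ suppF, lam i * u i = 1 := by
        have h4 : ∀ i ∈ suppF, lam i * u i = (lam i * α i) / T := by
          intro i hi; rw [hu]; ring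
        rw [Finset.sum_congr rfl h4, ← Finset.sum_div, ← hT, div_self (ne_of_gt hTpos)]
      apply hyL
      rw [hcombo u hsum1]
      apply (hLc.interior).sum_mem (fun i hi => (hlam i)) hssupp
      intro i hi
      apply hα3 i hi _ (div_nonneg (hα1 i hi).le hTpos.le)
      have hlt : α i / T < α i := by
        calc α i / T < α i / 1 := div_lt_div_of_pos_left (hα1 i hi) one_pos hcon
          _ = α i := div_one _
      exact hlt
    have hTnn : 0 ≤ T :=
      Finset.sum_nonneg fun i hi => mul_nonneg (hlam i) (hα1 i hi).le
    obtain ⟨i1, hi1⟩ := hsuppne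
    set slack : ℝ := (1 - T) / lam i1 with hslack
    have hsl : 0 ≤ slack := div_nonneg (by linarith) (hsupppos i1 hi1).le
    set tf : V → ℝ := fun i => α i + (if i = i1 then slack else 0) with htf
    have htge : ∀ i ∈ suppF, α i ≤ tf i := by
      intro i hi; rw [htf]; dsimp only
      by_cases h : i = i1 <;> simp [h, hsl]
    have hsum1 : ∑ i ∈ suppF, lam i * tf i = 1 := by
      have h4 : ∀ i ∈ suppF, lam i * tf i
          = lam i * α i + (if i = i1 then lam i1 * slack else 0) := by
        intro i hi; rw [htf]; dsimp only
        by_cases h : i = i1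
        · subst h; rw [if_pos rfl, if_pos rfl]; ring
        · rw [if_neg h, if_neg h]; ring
      rw [Finset.sum_congr rfl h4, Finset.sum_add_distrib,
        Finset.sum_ite_eq' suppF i1 (fun _ => lam i1 * slack), if_pos hi1, ← hT, hslack,
        mul_div_cancel₀ _ (ne_of_gt (hsupppos i1 hi1))]
      ring
    rw [hcombo tf hsum1, hH]
    apply (convex_convexHull ℝ _).sum_mem (fun i hi => (hlam i)) hssupp
    intro i hi
    rw [← hH]
    apply hSiH i (hsuppIn i hi)
    constructor
    · exact mem_hullCone (subset_convexHull ℝ _ (Set.mem_insert _ _))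
        (coneSet_smul (le_trans (hα1 i hi).le (htge i hi)) hcC)
    · exact ray_beyond hLc (hsuppIn i hi) (hα1 i hi) (hα2 i hi) (htge i hi)
  -- CASE C : segment case, 0 < s < 1
  · have hs2pos : 0 < s2 := lt_of_le_of_ne hs2nn (Ne.symm hs20)
    have hslt1 : s < 1 := by linarith
    set z : Fin n → ℝ := s2⁻¹ • (∑ i ∈ OutF, lam i • v i + ∑ j, mu j • r j) with hz
    have hzPi : ∀ i' : V, z ∈ hullCone r (insert (v i') (v '' Out)) := by
      intro i'
      have hzeq : z = ∑ i ∈ OutF, (s2⁻¹ * lam i) • v i + s2⁻¹ • ∑ j, mu j • r j := by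
        rw [hz, smul_add, Finset.smul_sum]
        congr 1
        exact Finset.sum_congr rfl fun i _ => smul_smul _ _ _
      rw [hzeq]
      refine mem_hullCone (houtmem i' _ ?_ ?_)
        (coneSet_smul (inv_nonneg.mpr hs2nn) ⟨mu, hmu, rfl⟩)
      · intro i _; exact mul_nonneg (inv_nonneg.mpr hs2nn) (hlam i)
      · rw [← Finset.mul_sum, ← hs2, inv_mul_cancel₀ hs20]
    have hyz : y = ∑ i ∈ suppF, lam i • v i + s2 • z := by
      rw [hy, hsplitv, ← hInsupp, hz, smul_inv_smul₀ hs20, add_assoc]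
    have hq : s⁻¹ • (∑ i ∈ suppF, lam i • v i) ∈ interior L := by
      have h5 : s⁻¹ • (∑ i ∈ suppF, lam i • v i) = ∑ i ∈ suppF, (s⁻¹ * lam i) • v i := by
        rw [Finset.smul_sum]; exact Finset.sum_congr rfl fun i _ => smul_smul _ _ _
      rw [h5]
      exact (hLc.interior).sum_mem (fun i _ => mul_nonneg (inv_nonneg.mpr hsnn) (hlam i))
        (by rw [← Finset.mul_sum, ← hInsupps, inv_mul_cancel₀ hs0])
        (fun i hi => hsuppIn i hi)
    have hzL : z ∉ interior L := by
      intro hzint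
      apply hyL
      have h6 : y = s • (s⁻¹ • (∑ i ∈ suppF, lam i • v i)) + s2 • z := by
        rw [smul_inv_smul₀ hs0]; exact hyz
      rw [h6]
      exact (hLc.interior) hq hzint hsnn hs2nn hsplits
    have hAllx : ∀ i ∈ suppF, ∃ τ : ℝ, 0 < τ ∧ τ ≤ 1 ∧ v i + τ • (z - v i) ∉ interior L ∧
        ∀ u, 0 ≤ u → u < τ → v i + u • (z - v i) ∈ interior L :=
      fun i hi => exit_segment (hsuppIn i hi) hzL
    choose! τ hτ1 hτ2 hτ3 hτ4 using hAllx
    set f : ℝ → ℝ := fun θ => ∑ i ∈ suppF, lam i / (1 - θ * τ i) with hf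
    have hf0 : f 0 = s := by
      rw [hf]; dsimp only; rw [hInsupps]
      exact Finset.sum_congr rfl fun i _ => by norm_num
    have hKEY : (∀ i ∈ suppF, τ i < 1) ∧ ∑ i ∈ suppF, lam i / (1 - τ i) ≤ 1 := by
      by_contra hcon
      have hmain : ∃ θb, 0 ≤ θb ∧ θb < 1 ∧ f θb = 1 := by
        by_cases hτall : ∀ i ∈ suppF, τ i < 1
        · have hWgt : 1 < ∑ i ∈ suppF, lam i / (1 - τ i) := by
            by_contra h; push_neg at h; exact hcon ⟨hτall, h⟩
          have hden : ∀ θ ∈ Set.Icc (0:ℝ) 1, ∀ i ∈ suppF, 0 < 1 - θ * τ i := by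
            intro θ hθ i hi
            nlinarith [hτ1 i hi, hτall i hi, hθ.1, hθ.2,
              mul_nonneg (sub_nonneg.mpr hθ.2) (hτ1 i hi).le]
          have hfc : ContinuousOn f (Set.Icc (0:ℝ) 1) := by
            apply continuousOn_finset_sum
            intro i hi
            exact continuousOn_const.div
              (continuousOn_const.sub (continuousOn_id.mul continuousOn_const))
              (fun θ hθ => ne_of_gt (hden θ hθ i hi))
          have hf1 : f 1 = ∑ i ∈ suppF, lam i / (1 - τ i) := by
            rw [hf]; dsimp only
            exact Finset.sum_congr rfl fun i _ => by rw [one_mul]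
          have h1mem : (1:ℝ) ∈ Set.Icc (f 0) (f 1) := by
            constructor
            · rw [hf0]; linarith
            · rw [hf1]; exact hWgt.le
          obtain ⟨θb, hθbmem, hfθb⟩ := intermediate_value_Icc zero_le_one hfc h1mem
          refine ⟨θb, hθbmem.1, ?_, hfθb⟩
          rcases lt_or_eq_of_le hθbmem.2 with h | h
          · exact h
          · exfalso; rw [h] at hfθb; rw [hf1] at hfθb; linarith
        · push_neg at hτall
          obtain ⟨ist, hist, hτge⟩ := hτall
          have hτeq : τ ist = 1 := le_antisymm (hτ2 _ hist) hτge
          have hlampos := hsupppos _ hist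
          set θ0 : ℝ := max 0 (1 - lam ist) with hθ0
          have hθ00 : 0 ≤ θ0 := le_max_left _ _
          have hθ01 : θ0 < 1 := by
            rw [hθ0]; apply max_lt one_pos; linarith
          have hden : ∀ θ ∈ Set.Icc (0:ℝ) θ0, ∀ i ∈ suppF, 0 < 1 - θ * τ i := by
            intro θ hθ i hi
            have h7 := hτ1 i hi
            have h8 := hτ2 i hi
            nlinarith [hθ.1, hθ.2, mul_nonneg hθ.1 h7.le]
          have hfc : ContinuousOn f (Set.Icc (0:ℝ) θ0) := by
            apply continuousOn_finset_sum
            intro i hi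
            exact continuousOn_const.div
              (continuousOn_const.sub (continuousOn_id.mul continuousOn_const))
              (fun θ hθ => ne_of_gt (hden θ hθ i hi))
          have hfθ0 : 1 ≤ f θ0 := by
            have hd0 : 0 < 1 - θ0 := by linarith
            have hterm : 1 ≤ lam ist / (1 - θ0 * τ ist) := by
              rw [hτeq, mul_one, le_div_iff₀ hd0, one_mul]
              have : 1 - lam ist ≤ θ0 := le_max_right _ _
              linarith
            calc (1:ℝ) ≤ lam ist / (1 - θ0 * τ ist) := hterm
              _ ≤ f θ0 := by
                  apply Finset.single_le_sum
                    (f := fun i => lam i / (1 - θ0 * τ i)) _ hist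
                  intro i hi
                  exact div_nonneg (hlam i)
                    (hden θ0 (Set.mem_Icc.mpr ⟨hθ00, le_refl _⟩) i hi).le
          have h1mem : (1:ℝ) ∈ Set.Icc (f 0) (f θ0) := ⟨by rw [hf0]; linarith, hfθ0⟩
          obtain ⟨θb, hθbmem, hfθb⟩ := intermediate_value_Icc hθ00 hfc h1mem
          exact ⟨θb, hθbmem.1, lt_of_le_of_lt hθbmem.2 hθ01, hfθb⟩
      obtain ⟨θb, hθb0, hθb1, hfθb⟩ := hmain
      apply hyL
      set u : V → ℝ := fun i => θb * τ i with hu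
      have hui : ∀ i ∈ suppF, 0 ≤ u i ∧ u i < τ i := by
        intro i hi
        constructor
        · exact mul_nonneg hθb0 (hτ1 i hi).le
        · rw [hu]; dsimp only
          calc θb * τ i < 1 * τ i := by
                apply mul_lt_mul_of_pos_right hθb1 (hτ1 i hi)
            _ = τ i := one_mul _
      have hden : ∀ i ∈ suppF, 0 < 1 - u i := by
        intro i hi
        have := (hui i hi).2
        have := hτ2 i hi
        linarith
      have hfsum : ∑ i ∈ suppF, lam i / (1 - u i) = 1 := hfθb
      have hterm : ∀ i ∈ suppF, (lam i / (1 - u i)) • (v i + u i • (z - v i))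
          = lam i • v i + ((lam i / (1 - u i)) * u i) • z := by
        intro i hi
        have h1 : (lam i / (1 - u i)) * (1 - u i) = lam i :=
          div_mul_cancel₀ _ (ne_of_gt (hden i hi))
        have h2 : v i + u i • (z - v i) = (1 - u i) • v i + u i • z := by module
        rw [h2, smul_add, smul_smul, smul_smul, h1]
      have hsum2 : ∑ i ∈ suppF, (lam i / (1 - u i)) * u i = s2 := by
        have h9 : ∀ i ∈ suppF, (lam i / (1 - u i)) * u i = lam i / (1 - u i) - lam i := by
          intro i hi
          have h1 : (lam i / (1 - u i)) * (1 - u i) = lam i :=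
            div_mul_cancel₀ _ (ne_of_gt (hden i hi))
          nlinarith [h1]
        rw [Finset.sum_congr rfl h9, Finset.sum_sub_distrib, hfsum, ← hInsupps]
        linarith
      have hident : y = ∑ i ∈ suppF, (lam i / (1 - u i)) • (v i + u i • (z - v i)) := by
        rw [Finset.sum_congr rfl hterm, Finset.sum_add_distrib, ← Finset.sum_smul, hsum2,
          ← hyz]
      rw [hident]
      exact (hLc.interior).sum_mem (fun i hi => div_nonneg (hlam i) (hden i hi).le) hfsum
        (fun i hi => hτ4 i hi _ (hui i hi).1 (hui i hi).2)
    obtain ⟨hτall, hW⟩ := hKEY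
    set ν : V → ℝ := fun i => lam i / (1 - τ i) with hν
    have hdτ : ∀ i ∈ suppF, 0 < 1 - τ i := fun i hi => by linarith [hτall i hi]
    have hνpos : ∀ i ∈ suppF, 0 < ν i := fun i hi =>
      div_pos (hsupppos i hi) (hdτ i hi)
    set N : ℝ := ∑ i ∈ suppF, ν i with hN
    have hNpos : 0 < N := Finset.sum_pos hνpos hsuppne
    have hN1 : N ≤ 1 := hW
    have hpmem : ∀ i ∈ suppF, (v i + τ i • (z - v i)) ∈ H := by
      intro i hi
      apply hSiH i (hsuppIn i hi)
      constructor
      · have h2 : v i + τ i • (z - v i) = (1 - τ i) • v i + τ i • z := by module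
        rw [h2]
        exact (convex_hullCone r _) (point_mem_hullCone (Set.mem_insert _ _)) (hzPi i)
          (hdτ i hi).le (hτ1 i hi).le (by ring)
      · exact hτ3 i hi
    have hzH : z ∈ H := hSiH i0 hi0 ⟨hzPi i0, hzL⟩
    have hterm : ∀ i ∈ suppF, ν i • (v i + τ i • (z - v i))
        = lam i • v i + (ν i * τ i) • z := by
      intro i hi
      have h1 : ν i * (1 - τ i) = lam i := div_mul_cancel₀ _ (ne_of_gt (hdτ i hi))
      have h2 : v i + τ i • (z - v i) = (1 - τ i) • v i + τ i • z := by module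
      rw [h2, smul_add, smul_smul, smul_smul, h1]
    have hsumντ : ∑ i ∈ suppF, ν i * τ i = N - s := by
      have h9 : ∀ i ∈ suppF, ν i * τ i = ν i - lam i := by
        intro i hi
        have h1 : ν i * (1 - τ i) = lam i := div_mul_cancel₀ _ (ne_of_gt (hdτ i hi))
        nlinarith [h1]
      rw [Finset.sum_congr rfl h9, Finset.sum_sub_distrib, ← hN, ← hInsupps]
    have hcombo : y = ∑ i ∈ suppF, ν i • (v i + τ i • (z - v i)) + (1 - N) • z := by
      rw [Finset.sum_congr rfl hterm, Finset.sum_add_distrib, ← Finset.sum_smul, hsumντ,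
        hyz, add_assoc, ← add_smul]
      have : N - s + (1 - N) = s2 := by linarith
      rw [this]
    rw [hcombo, hH]
    have hsmulN : ∑ i ∈ suppF, ν i • (v i + τ i • (z - v i))
        = N • (N⁻¹ • ∑ i ∈ suppF, ν i • (v i + τ i • (z - v i))) :=
      (smul_inv_smul₀ (ne_of_gt hNpos) _).symm
    have hP1 : N⁻¹ • (∑ i ∈ suppF, ν i • (v i + τ i • (z - v i)))
        ∈ convexHull ℝ (⋃ i ∈ {i : V | v i ∈ interior L}, Si i) := by
      have h5 : N⁻¹ • (∑ i ∈ suppF, ν i • (v i + τ i • (z - v i)))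
          = ∑ i ∈ suppF, (N⁻¹ * ν i) • (v i + τ i • (z - v i)) := by
        rw [Finset.smul_sum]; exact Finset.sum_congr rfl fun i _ => smul_smul _ _ _
      rw [h5]
      apply (convex_convexHull ℝ _).sum_mem
        (fun i hi => mul_nonneg (inv_nonneg.mpr hNpos.le) (hνpos i hi).le)
        (by rw [← Finset.mul_sum, ← hN, inv_mul_cancel₀ (ne_of_gt hNpos)])
      intro i hi
      have := hpmem i hi
      rw [hH] at this
      exact this
    rw [hsmulN]
    have hzH' : z ∈ convexHull ℝ (⋃ i ∈ {i : V | v i ∈ interior L}, Si i) := by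
      have := hzH; rw [hH] at this; exact this
    exact (convex_convexHull ℝ _) hP1 hzH' hNpos.le (by linarith) (by ring)
end MainM

section Help
variable {n : ℕ} {V E : Type*} [Fintype V] [Fintype E]

lemma line_combo (x w : Fin n → ℝ) (a bb θ1 θ2 : ℝ) (h1 : a + bb = 1)
    (h2 : a * θ1 + bb * θ2 = 0) :
    a • (x + θ1 • w) + bb • (x + θ2 • w) = x := by
  have h3 : a • (x + θ1 • w) + bb • (x + θ2 • w) = (a + bb) • x + (a * θ1 + bb * θ2) • w := by
    module
  rw [h3, h1, h2]
  simp

lemma help_line {m : ℕ}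
    (v : V → Fin n → ℝ) (r : E → Fin n → ℝ)
    {A : Fin m → Fin n → ℝ} {b : Fin m → ℝ} {L : Set (Fin n → ℝ)}
    (hLeq : L = {x : Fin n → ℝ | ∀ i, ∑ j, A i j * x j ≤ b i})
    (hlin : ∀ d : Fin n → ℝ, (∀ x ∈ L, ∀ t : ℝ, 0 ≤ t → x + t • d ∈ L) →
        ∀ x ∈ L, ∀ t : ℝ, 0 ≤ t → x - t • d ∈ L)
    {P : Set (Fin n → ℝ)} (hPconv : Convex ℝ P) (hvP : ∀ i, v i ∈ P)
    (hPC : ∀ p ∈ P, ∀ cc ∈ coneSet r, p + cc ∈ P)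
    {x : Fin n → ℝ} (hxP : x ∈ P) (hxL : x ∈ L) (hxI : x ∉ interior L)
    {w : Fin n → ℝ}
    (F : Finset V) (G : Finset E) (lam : V → ℝ) (mus : E → ℝ)
    (hlamsupp : ∀ i ∈ F, 0 < lam i) (hmunn : ∀ j ∈ G, 0 ≤ mus j)
    (hlam1 : ∑ i ∈ F, lam i = 1)
    (t : V → ℝ) (c : E → ℝ)
    (hvt : ∀ i ∈ F, v i = x + t i • w) (hrc : ∀ j ∈ G, r j = c j • w)
    (hsum0 : ∑ i ∈ F, lam i * t i + ∑ j ∈ G, mus j * c j = 0)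
    (hAS : ∀ θ : ℝ, 0 ≤ θ → x + θ • w ∉ interior L)
    (hstar : ∀ θ₁ θ₂ : ℝ, θ₁ < 0 → 0 < θ₂ → x + θ₁ • w ∈ P → x + θ₁ • w ∉ interior L →
        x + θ₂ • w ∈ P → x + θ₂ • w ∉ interior L → False) :
    (∃ k, v k ∉ interior L ∧ x = v k) ∨
    (∃ i k, v i ∈ interior L ∧ v k ∉ interior L ∧
      x = v i + sSup {β : ℝ | v i + β • (v k - v i) ∈ L} • (v k - v i)) ∨
    (∃ i j, v i ∈ interior L ∧ BddAbove {α : ℝ | 0 ≤ α ∧ v i + α • r j ∈ L} ∧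
      x = v i + sSup {α : ℝ | 0 ≤ α ∧ v i + α • r j ∈ L} • r j) := by
  have hLconv : Convex ℝ L := hLeq ▸ convex_poly A b
  by_cases hex : ∃ i ∈ F, t i = 0
  · obtain ⟨i, hiF, hti⟩ := hex
    left
    have : v i = x := by rw [hvt i hiF, hti, zero_smul, add_zero]
    exact ⟨i, this ▸ hxI, this.symm⟩
  push_neg at hex
  have Fne : F.Nonempty := by
    rw [Finset.nonempty_iff_ne_empty]
    intro h
    rw [h, Finset.sum_empty] at hlam1
    norm_num at hlam1
  obtain ⟨im, him, hmin⟩ := F.exists_min_image t Fne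
  -- sum-positivity helper : if one coordinate is negative and nothing is positive, contradiction
  have hsumneg : ∀ i' ∈ F, t i' < 0 → (∀ i ∈ F, t i ≤ 0) → (∀ j ∈ G, c j ≤ 0) → False := by
    intro i' hi' hti' hall hallc
    have h1 : ∑ i ∈ F, lam i * t i < ∑ i ∈ F, (0:ℝ) := by
      apply Finset.sum_lt_sum
      · intro i hi
        exact mul_nonpos_of_nonneg_of_nonpos (hlamsupp i hi).le (hall i hi)
      · exact ⟨i', hi', mul_neg_of_pos_of_neg (hlamsupp i' hi') hti'⟩
    rw [Finset.sum_const_zero] at h1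
    have h2 : ∑ j ∈ G, mus j * c j ≤ 0 := Finset.sum_nonpos fun j hj =>
      mul_nonpos_of_nonneg_of_nonpos (hmunn j hj) (hallc j hj)
    linarith
  -- an "upper-direction witness" whenever the minimum coordinate is negative
  have hupper : t im < 0 → (∃ k ∈ F, 0 < t k) ∨ (∃ j ∈ G, 0 < c j) := by
    intro hmneg
    by_contra hcon
    push_neg at hcon
    exact hsumneg im him hmneg (fun i hi => (hcon.1 i hi)) (fun j hj => (hcon.2 j hj))
  rcases lt_trichotomy (t im) 0 with hm | hm | hm
  -- CASE : minimum coordinate negative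
  · rcases Classical.em (v im ∈ interior L) with him' | him'
    -- B2b : the minimal vertex is interior, x is the exit point
    · right
      -- no point on the positive side is in L
      have hNOL : ∀ θ : ℝ, 0 < θ → x + θ • w ∉ L := by
        intro θ hθ hmem
        apply hxI
        have hd : (0:ℝ) < θ - t im := by linarith
        have hseg := hLconv.openSegment_interior_closure_subset_interior him'
          (subset_closure hmem)
        apply hseg
        refine ⟨θ / (θ - t im), (-(t im)) / (θ - t im), div_pos hθ hd,
          div_pos (by linarith) hd, ?_, ?_⟩
        · field_simp
          ring
        · rw [hvt im him]
          apply line_combo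
          · field_simp
            ring
          · field_simp
            ring
      rcases hupper hm with ⟨k, hk, htk⟩ | ⟨j, hj, hcj⟩
      · -- form (ii)
        left
        have hvkI : v k ∉ interior L := by
          rw [hvt k hk]; exact hAS (t k) htk.le
        refine ⟨im, k, him', hvkI, ?_⟩
        have hd : 0 < t k - t im := by linarith
        have hβmem : ∀ β : ℝ, v im + β • (v k - v im) = x + (t im + β * (t k - t im)) • w := by
          intro β
          rw [hvt k hk, hvt im him]
          module
        set βst : ℝ := (-(t im)) / (t k - t im) with hβst
        have hcoord : t im + βst * (t k - t im) = 0 := by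
          rw [hβst]; field_simp; ring
        have h1 : βst ∈ {β : ℝ | v im + β • (v k - v im) ∈ L} := by
          show v im + βst • (v k - v im) ∈ L
          rw [hβmem, hcoord, zero_smul, add_zero]
          exact hxL
        have h2 : ∀ β ∈ {β : ℝ | v im + β • (v k - v im) ∈ L}, β ≤ βst := by
          intro β hβ
          by_contra hgt
          push_neg at hgt
          refine hNOL (t im + β * (t k - t im)) ?_ ?_
          · have : -(t im) < β * (t k - t im) := by
              calc -(t im) = βst * (t k - t im) := by rw [hβst]; field_simp
                _ < β * (t k - t im) := by exact mul_lt_mul_of_pos_right hgt hd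
            linarith
          · rw [← hβmem]; exact hβ
        have hsup : sSup {β : ℝ | v im + β • (v k - v im) ∈ L} = βst :=
          le_antisymm (csSup_le ⟨βst, h1⟩ h2) (le_csSup ⟨βst, h2⟩ h1)
        rw [hsup, hβmem, hcoord, zero_smul, add_zero]
      · -- form (iii)
        right
        refine ⟨im, j, him', ?_, ?_⟩
        · -- BddAbove
          refine ⟨(-(t im)) / c j, ?_⟩
          intro β hβ
          obtain ⟨hβ0, hβL⟩ := hβ
          by_contra hgt
          push_neg at hgt
          refine hNOL (t im + β * c j) ?_ ?_
          · have : -(t im) < β * c j := by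
              calc -(t im) = ((-(t im)) / c j) * c j := by field_simp
                _ < β * c j := mul_lt_mul_of_pos_right hgt hcj
            linarith
          · rw [← show v im + β • r j = x + (t im + β * c j) • w by
              rw [hrc j hj, hvt im him]; module]
            exact hβL
        · set αst : ℝ := (-(t im)) / c j with hαst
          have hαmem : ∀ β : ℝ, v im + β • r j = x + (t im + β * c j) • w := by
            intro β
            rw [hrc j hj, hvt im him]
            module
          have hcoord : t im + αst * c j = 0 := by
            rw [hαst]; field_simp; ring
          have h1 : αst ∈ {α : ℝ | 0 ≤ α ∧ v im + α • r j ∈ L} := by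
            constructor
            · rw [hαst]
              apply div_nonneg <;> linarith
            · rw [hαmem, hcoord, zero_smul, add_zero]; exact hxL
          have h2 : ∀ β ∈ {α : ℝ | 0 ≤ α ∧ v im + α • r j ∈ L}, β ≤ αst := by
            intro β hβ
            by_contra hgt
            push_neg at hgt
            refine hNOL (t im + β * c j) ?_ ?_
            · have : -(t im) < β * c j := by
                calc -(t im) = αst * c j := by rw [hαst]; field_simp
                  _ < β * c j := mul_lt_mul_of_pos_right hgt hcj
              linarith
            · rw [← hαmem]; exact hβ.2
          have hsup : sSup {α : ℝ | 0 ≤ α ∧ v im + α • r j ∈ L} = αst :=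
            le_antisymm (csSup_le ⟨αst, h1⟩ h2) (le_csSup ⟨αst, h2⟩ h1)
          rw [hsup, hαmem, hcoord, zero_smul, add_zero]
    -- B2a : the minimal vertex is not interior : contradiction with extremality
    · exfalso
      have hvimP : x + t im • w ∈ P := by rw [← hvt im him]; exact hvP im
      have hvimI : x + t im • w ∉ interior L := by rw [← hvt im him]; exact him'
      rcases hupper hm with ⟨k, hk, htk⟩ | ⟨j, hj, hcj⟩
      · exact hstar (t im) (t k) hm htk hvimP hvimI
          (by rw [← hvt k hk]; exact hvP k) (by rw [← hvt k hk]; rw [hvt k hk]; exact hAS _ htk.le)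
      · have hup : x + c j • w ∈ P := by
          have h3 := hPC x hxP (r j) (single_mem_coneSet r j)
          rw [hrc j hj] at h3
          exact h3
        exact hstar (t im) (c j) hm hcj hvimP hvimI hup (hAS _ hcj.le)
  · exact absurd hm (hex im him)
  -- CASE : minimum coordinate positive (all vertices on the positive side)
  · exfalso
    have h1 : 0 < ∑ i ∈ F, lam i * t i :=
      Finset.sum_pos (fun i hi => mul_pos (hlamsupp i hi) (lt_of_lt_of_le hm (hmin i hi))) Fne
    have h2 : ∑ j ∈ G, mus j * c j < 0 := by linarith
    have h3 : ∃ j ∈ G, mus j * c j < 0 := by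
      by_contra hcon
      push_neg at hcon
      exact absurd (Finset.sum_nonneg hcon) (not_le.mpr h2)
    obtain ⟨j0, hj0, hmc⟩ := h3
    have hcj0 : c j0 < 0 := by
      rcases lt_trichotomy (c j0) 0 with h | h | h
      · exact h
      · rw [h, mul_zero] at hmc; norm_num at hmc
      · nlinarith [hmunn j0 hj0]
    by_cases hIall : ∀ θ : ℝ, θ < 0 → x + θ • w ∈ interior L
    · -- recession + hlin contradiction
      have hLline : ∀ θ : ℝ, θ < 0 →
          x + θ • w ∈ {x : Fin n → ℝ | ∀ i, ∑ j, A i j * x j ≤ b i} := by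
        intro θ hθ
        rw [← hLeq]
        exact interior_subset (hIall θ hθ)
      have hrow := rows_nonneg_of_ray A b hLline
      have hrecm : ∀ p ∈ L, ∀ s : ℝ, 0 ≤ s → p + s • (-w) ∈ L := by
        intro p hp s hs
        rw [hLeq] at hp ⊢
        have hneg : ∀ i, ∑ j, A i j * (-w) j ≤ 0 := by
          intro i
          have h5 := hrow i
          have h6 : ∑ j, A i j * (-w) j = -∑ j, A i j * w j := by
            rw [← Finset.sum_neg_distrib]
            exact Finset.sum_congr rfl fun j _ => by simp
          rw [h6]
          linarith
        exact recession_mem A b hneg hp s hs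
      have hrecp := hlin (-w) hrecm
      have hrecw : ∀ p ∈ L, p + w ∈ L := by
        intro p hp
        have h7 := hrecp p hp 1 zero_le_one
        have h8 : p - (1:ℝ) • (-w) = p + w := by module
        rw [h8] at h7
        exact h7
      have hInt : x + (-1 : ℝ) • w ∈ interior L := hIall (-1) (by norm_num)
      have h9 := interior_add_mem hrecw hInt
      apply hxI
      have h10 : x + (-1 : ℝ) • w + w = x := by module
      rw [h10] at h9
      exact h9
    · push_neg at hIall
      obtain ⟨θm, hθm, hθmI⟩ := hIall
      have hmemP : x + θm • w ∈ P := by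
        have hη : 0 ≤ θm / c j0 := div_nonneg_of_nonpos hθm.le hcj0.le
        have h3 := hPC x hxP ((θm / c j0) • r j0) (coneSet_smul hη (single_mem_coneSet r j0))
        rw [hrc j0 hj0, smul_smul, div_mul_cancel₀ _ (ne_of_lt hcj0)] at h3
        exact h3
      exact hstar θm (t im) hθm hm hmemP hθmI
        (by rw [← hvt im him]; exact hvP im) (hAS (t im) hm.le)
end Help

section PolyFacts2
variable {n m : ℕ} (A : Fin m → Fin n → ℝ) (b : Fin m → ℝ)

lemma row_lin (i : Fin m) (p q : ℝ) (u z : Fin n → ℝ) :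
    ∑ j, A i j * (p • u + q • z) j = p * (∑ j, A i j * u j) + q * (∑ j, A i j * z j) := by
  simp only [Pi.add_apply, Pi.smul_apply, smul_eq_mul, Finset.mul_sum,
    ← Finset.sum_add_distrib]
  exact Finset.sum_congr rfl fun j _ => by ring

lemma interior_strict {x : Fin n → ℝ}
    (hx : x ∈ interior {x : Fin n → ℝ | ∀ i, ∑ j, A i j * x j ≤ b i})
    (i : Fin m) (hAi : A i ≠ 0) : ∑ j, A i j * x j < b i := by
  have hcont : Continuous fun δ : ℝ => x + δ • (A i) :=
    continuous_const.add (continuous_id.smul continuous_const)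
  have hopen : IsOpen ((fun δ : ℝ => x + δ • (A i)) ⁻¹' interior
      {x : Fin n → ℝ | ∀ i, ∑ j, A i j * x j ≤ b i}) :=
    isOpen_interior.preimage hcont
  have h0 : (0:ℝ) ∈ (fun δ : ℝ => x + δ • (A i)) ⁻¹' interior
      {x : Fin n → ℝ | ∀ i, ∑ j, A i j * x j ≤ b i} := by
    simp only [Set.mem_preimage, zero_smul, add_zero]
    exact hx
  obtain ⟨δ, hδpos, hball⟩ := Metric.isOpen_iff.mp hopen 0 h0
  have hδ2 : (δ/2 : ℝ) ∈ Metric.ball (0:ℝ) δ := by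
    rw [Metric.mem_ball, Real.dist_eq, sub_zero]
    rw [abs_of_pos (by linarith)]
    linarith
  have hmem := hball hδ2
  have hL := interior_subset hmem
  have hrow := hL i
  rw [row_affine] at hrow
  have hsq : 0 < ∑ j, A i j * A i j := by
    have hex : ∃ j, A i j ≠ 0 := by
      by_contra hc
      push_neg at hc
      exact hAi (funext hc)
    obtain ⟨j0, hj0⟩ := hex
    apply Finset.sum_pos' (fun j _ => mul_self_nonneg _)
    refine ⟨j0, Finset.mem_univ _, ?_⟩
    rcases lt_or_gt_of_ne hj0 with h | h
    · exact mul_pos_of_neg_of_neg h h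
    · exact mul_pos h h
  nlinarith
end PolyFacts2

section ExtremeForm
variable {n : ℕ} {V E : Type*} [Fintype V] [Fintype E]

set_option maxHeartbeats 1000000 in
lemma extreme_form {m : ℕ}
    (v : V → Fin n → ℝ) (r : E → Fin n → ℝ)
    {A : Fin m → Fin n → ℝ} {b : Fin m → ℝ} {L : Set (Fin n → ℝ)}
    (hLeq : L = {x : Fin n → ℝ | ∀ i, ∑ j, A i j * x j ≤ b i})
    (hlin : ∀ d : Fin n → ℝ, (∀ x ∈ L, ∀ t : ℝ, 0 ≤ t → x + t • d ∈ L) →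
        ∀ x ∈ L, ∀ t : ℝ, 0 ≤ t → x - t • d ∈ L)
    {P : Set (Fin n → ℝ)} (hP : P = hullCone r (Set.range v))
    {x : Fin n → ℝ}
    (hx : x ∈ Set.extremePoints ℝ (convexHull ℝ {y ∈ P | y ∉ interior L})) :
    (∃ k, v k ∉ interior L ∧ x = v k) ∨
    (∃ i k, v i ∈ interior L ∧ v k ∉ interior L ∧
      x = v i + sSup {β : ℝ | v i + β • (v k - v i) ∈ L} • (v k - v i)) ∨
    (∃ i j, v i ∈ interior L ∧ BddAbove {α : ℝ | 0 ≤ α ∧ v i + α • r j ∈ L} ∧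
      x = v i + sSup {α : ℝ | 0 ≤ α ∧ v i + α • r j ∈ L} • r j) := by
  classical
  have hLconv : Convex ℝ L := hLeq ▸ convex_poly A b
  have hPconv : Convex ℝ P := hP ▸ convex_hullCone r _
  have hvP : ∀ i, v i ∈ P := fun i => hP ▸ point_mem_hullCone ⟨i, rfl⟩
  have hPC : ∀ p ∈ P, ∀ cc ∈ coneSet r, p + cc ∈ P := by
    intro p hp cc hcc
    rw [hP] at hp ⊢
    exact hullCone_add_cone hp hcc
  have hxS : x ∈ {y ∈ P | y ∉ interior L} := extremePoints_convexHull_subset hx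
  obtain ⟨hxP, hxI⟩ := hxS
  obtain ⟨lam, mus, hlamnn, hmunn, hlam1, hxrep⟩ :
      ∃ (lam : V → ℝ) (mus : E → ℝ), (∀ i, 0 ≤ lam i) ∧ (∀ j, 0 ≤ mus j) ∧
        (∑ i, lam i = 1) ∧ x = ∑ i, lam i • v i + ∑ j, mus j • r j := by
    have h0 := hP ▸ hxP
    obtain ⟨a, ha, cc, hcc, hsum⟩ := h0
    obtain ⟨lam, hlamnn, hlam1, harep⟩ := (mem_hull_range_iff v a).mp ha
    obtain ⟨mus, hmunn, hcrep⟩ := hcc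
    exact ⟨lam, mus, hlamnn, hmunn, hlam1, by rw [← hsum, harep, hcrep]⟩
  set F : Finset V := Finset.univ.filter (fun i => 0 < lam i) with hF
  set G : Finset E := Finset.univ.filter (fun j => 0 < mus j) with hG
  have hlamsupp : ∀ i ∈ F, 0 < lam i := fun i hi => (Finset.mem_filter.mp hi).2
  have hmusupp : ∀ j ∈ G, 0 < mus j := fun j hj => (Finset.mem_filter.mp hj).2
  have hlamF : ∑ i ∈ F, lam i = 1 := by
    rw [← hlam1]
    apply Finset.sum_subset (Finset.filter_subset _ _)
    intro i _ hiF
    have h1 : ¬ 0 < lam i := fun h => hiF (Finset.mem_filter.mpr ⟨Finset.mem_univ _, h⟩)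
    linarith [hlamnn i]
  have hxrepF : x = ∑ i ∈ F, lam i • v i + ∑ j ∈ G, mus j • r j := by
    rw [hxrep]
    congr 1
    · refine (Finset.sum_subset (Finset.filter_subset _ _) ?_).symm
      intro i _ hiF
      have h1 : ¬ 0 < lam i := fun h => hiF (Finset.mem_filter.mpr ⟨Finset.mem_univ _, h⟩)
      have h0 : lam i = 0 := by linarith [hlamnn i]
      simp [h0]
    · refine (Finset.sum_subset (Finset.filter_subset _ _) ?_).symm
      intro j _ hjG
      have h1 : ¬ 0 < mus j := fun h => hjG (Finset.mem_filter.mpr ⟨Finset.mem_univ _, h⟩)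
      have h0 : mus j = 0 := by linarith [hmunn j]
      simp [h0]
  have hFne : F.Nonempty := by
    rw [Finset.nonempty_iff_ne_empty]
    intro h
    rw [h, Finset.sum_empty] at hlamF
    norm_num at hlamF
  have hmid : ∀ (d : Fin n → ℝ) (s1 s2 : ℝ), s1 < 0 → 0 < s2 →
      x + s1 • d ∈ P → x + s1 • d ∉ interior L →
      x + s2 • d ∈ P → x + s2 • d ∉ interior L → d = 0 := by
    intro d s1 s2 hs1 hs2 hP1 hI1 hP2 hI2
    have hd : (0:ℝ) < s2 - s1 := by linarith
    have hmem1 : x + s1 • d ∈ convexHull ℝ {y ∈ P | y ∉ interior L} :=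
      subset_convexHull ℝ _ ⟨hP1, hI1⟩
    have hmem2 : x + s2 • d ∈ convexHull ℝ {y ∈ P | y ∉ interior L} :=
      subset_convexHull ℝ _ ⟨hP2, hI2⟩
    have hseg : x ∈ openSegment ℝ (x + s1 • d) (x + s2 • d) := by
      refine ⟨s2 / (s2 - s1), (-s1) / (s2 - s1), div_pos hs2 hd,
        div_pos (by linarith) hd, ?_, ?_⟩
      · rw [← add_div, show s2 + -s1 = s2 - s1 from by ring]
        exact div_self (ne_of_gt hd)
      · apply line_combo
        · rw [← add_div, show s2 + -s1 = s2 - s1 from by ring]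
          exact div_self (ne_of_gt hd)
        · field_simp
          ring
    have hext := (mem_extremePoints.mp hx).2 _ hmem1 _ hmem2 hseg
    have h2 : s1 • d = 0 := add_eq_left.mp hext.1
    rcases smul_eq_zero.mp h2 with h | h
    · exact absurd h (ne_of_lt hs1)
    · exact h
  set Adm : (Fin n → ℝ) → Prop :=
    fun d => ∃ ε : ℝ, 0 < ε ∧ ∀ s : ℝ, |s| ≤ ε → x + s • d ∈ P with hAdm
  have hAdm0 : Adm 0 := ⟨1, one_pos, fun s _ => by simpa using hxP⟩
  have hAdmsmul : ∀ (cc : ℝ) (d : Fin n → ℝ), Adm d → Adm (cc • d) := by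
    intro cc d hd
    obtain ⟨ε, hε, hdP⟩ := hd
    by_cases hc0 : cc = 0
    · rw [hc0, zero_smul]; exact hAdm0
    · refine ⟨ε / |cc|, div_pos hε (abs_pos.mpr hc0), fun s hs => ?_⟩
      have h1 : x + s • cc • d = x + (s * cc) • d := by module
      rw [h1]
      apply hdP
      rw [abs_mul]
      calc |s| * |cc| ≤ (ε / |cc|) * |cc| :=
            mul_le_mul_of_nonneg_right hs (abs_nonneg _)
        _ = ε := div_mul_cancel₀ _ (ne_of_gt (abs_pos.mpr hc0))
  have hAdmadd : ∀ d d' : Fin n → ℝ, Adm d → Adm d' → Adm (d + d') := by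
    intro d d' hd hd'
    obtain ⟨ε, hε, hdP⟩ := hd
    obtain ⟨ε', hε', hdP'⟩ := hd'
    refine ⟨min ε ε' / 2, by positivity, fun s hs => ?_⟩
    have hb : |2 * s| ≤ min ε ε' := by
      rw [abs_mul, abs_two]
      linarith [hs]
    have h1 : x + (2*s) • d ∈ P := hdP _ (le_trans hb (min_le_left _ _))
    have h2 : x + (2*s) • d' ∈ P := hdP' _ (le_trans hb (min_le_right _ _))
    have h3 : x + s • (d + d') =
        (1/2 : ℝ) • (x + (2*s) • d) + (1/2 : ℝ) • (x + (2*s) • d') := by module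
    rw [h3]
    exact hPconv h1 h2 (by norm_num) (by norm_num) (by norm_num)
  have hAdmsumV : ∀ (s : Finset V) (f : V → Fin n → ℝ),
      (∀ i ∈ s, Adm (f i)) → Adm (∑ i ∈ s, f i) := by
    intro s f hf
    exact Finset.sum_induction f Adm hAdmadd hAdm0 hf
  have hAdmsumE : ∀ (s : Finset E) (f : E → Fin n → ℝ),
      (∀ i ∈ s, Adm (f i)) → Adm (∑ i ∈ s, f i) := by
    intro s f hf
    exact Finset.sum_induction f Adm hAdmadd hAdm0 hf
  have hAdmvv : ∀ i ∈ F, ∀ i' ∈ F, Adm (v i - v i') := by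
    intro i hi i' hi'
    refine ⟨min (lam i) (lam i'), lt_min (hlamsupp i hi) (hlamsupp i' hi'), fun s hs => ?_⟩
    obtain ⟨hs1, hs2⟩ := abs_le.mp hs
    set lam' : V → ℝ :=
      fun k => lam k + (if k = i then s else 0) - (if k = i' then s else 0) with hlam'
    have hnn : ∀ k, 0 ≤ lam' k := by
      intro k
      rw [hlam']
      dsimp only
      by_cases h1 : k = i <;> by_cases h2 : k = i'
      · rw [if_pos h1, if_pos h2]
        have := hlamnn k
        linarith
      · rw [if_pos h1, if_neg h2]
        subst h1
        have hmle := min_le_left (lam k) (lam i')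
        linarith
      · rw [if_neg h1, if_pos h2]
        subst h2
        have hmle := min_le_right (lam i) (lam k)
        linarith
      · rw [if_neg h1, if_neg h2]
        have := hlamnn k
        linarith
    have hsum' : ∑ k, lam' k = 1 := by
      rw [hlam']
      simp only
      rw [Finset.sum_sub_distrib, Finset.sum_add_distrib, hlam1,
        Finset.sum_ite_eq' Finset.univ i (fun _ => s),
        Finset.sum_ite_eq' Finset.univ i' (fun _ => s)]
      simp
    have hrepr : x + s • (v i - v i') = ∑ k, lam' k • v k + ∑ j, mus j • r j := by
      have h4 : ∑ k, lam' k • v k = ∑ k, lam k • v k + s • v i - s • v i' := by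
        rw [hlam']
        simp only [sub_smul, add_smul, ite_smul, zero_smul]
        rw [Finset.sum_sub_distrib, Finset.sum_add_distrib,
          Finset.sum_ite_eq' Finset.univ i (fun k => s • v k),
          Finset.sum_ite_eq' Finset.univ i' (fun k => s • v k)]
        simp
      rw [h4, hxrep]
      module
    rw [hrepr, hP]
    exact mem_hullCone ((mem_hull_range_iff v _).mpr ⟨lam', hnn, hsum', rfl⟩)
      ⟨mus, hmunn, rfl⟩
  have hAdmr : ∀ j ∈ G, Adm (r j) := by
    intro j hj
    refine ⟨mus j, hmusupp j hj, fun s hs => ?_⟩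
    obtain ⟨hs1, hs2⟩ := abs_le.mp hs
    set mus' : E → ℝ := fun j' => mus j' + (if j' = j then s else 0) with hmus'
    have hnn : ∀ j', 0 ≤ mus' j' := by
      intro j'
      rw [hmus']
      dsimp only
      by_cases h1 : j' = j
      · subst h1; rw [if_pos rfl]; linarith
      · rw [if_neg h1]; simpa using hmunn j'
    have hrepr : x + s • r j = ∑ i, lam i • v i + ∑ j', mus' j' • r j' := by
      have h4 : ∑ j', mus' j' • r j' = ∑ j', mus j' • r j' + s • r j := by
        rw [hmus']
        simp only [add_smul, ite_smul, zero_smul]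
        rw [Finset.sum_add_distrib, Finset.sum_ite_eq' Finset.univ j (fun k => s • r k)]
        simp
      rw [h4, hxrep]
      module
    rw [hrepr, hP]
    exact mem_hullCone ((mem_hull_range_iff v _).mpr ⟨lam, hlamnn, hlam1, rfl⟩)
      ⟨mus', hnn, rfl⟩
  have hAdmvx : ∀ i ∈ F, Adm (v i - x) := by
    intro i hi
    have hdecomp : v i - x =
        (∑ i' ∈ F, lam i' • (v i - v i')) + ∑ j ∈ G, (-(mus j)) • r j := by
      have h1 : ∑ i' ∈ F, lam i' • (v i - v i') = v i - ∑ i' ∈ F, lam i' • v i' := by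
        have h2 : ∀ i' ∈ F, lam i' • (v i - v i') = lam i' • v i - lam i' • v i' :=
          fun i' _ => smul_sub _ _ _
        rw [Finset.sum_congr rfl h2, Finset.sum_sub_distrib, ← Finset.sum_smul, hlamF,
          one_smul]
      have h3 : ∑ j ∈ G, (-(mus j)) • r j = -∑ j ∈ G, mus j • r j := by
        rw [← Finset.sum_neg_distrib]
        exact Finset.sum_congr rfl fun j _ => by rw [neg_smul]
      rw [h1, h3, hxrepF]
      abel
    rw [hdecomp]
    apply hAdmadd
    · exact hAdmsumV F (fun i' => lam i' • (v i - v i'))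
        (fun i' hi' => hAdmsmul (lam i') _ (hAdmvv i hi i' hi'))
    · exact hAdmsumE G (fun j => (-(mus j)) • r j)
        (fun j hj => hAdmsmul (-(mus j)) _ (hAdmr j hj))
  by_cases hxLmem : x ∈ L
  · -- boundary case
    have hxL' : x ∈ {x : Fin n → ℝ | ∀ i, ∑ j, A i j * x j ≤ b i} := by
      rw [← hLeq]; exact hxLmem
    have hxI' : x ∉ interior {x : Fin n → ℝ | ∀ i, ∑ j, A i j * x j ≤ b i} := by
      rw [← hLeq]; exact hxI
    obtain ⟨i₁, hA1, hrow1⟩ := boundary_row A b hxL' hxI'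
    have hnotint : ∀ y : Fin n → ℝ, (∑ j, A i₁ j * y j = b i₁) → y ∉ interior L := by
      intro y hy hyint
      rw [hLeq] at hyint
      exact absurd hy (ne_of_lt (interior_strict A b hyint i₁ hA1))
    have hKK : ∀ d : Fin n → ℝ, Adm d → (∑ j, A i₁ j * d j = 0) → d = 0 := by
      intro d hd hdot
      obtain ⟨ε, hε, hdP⟩ := hd
      apply hmid d (-ε) ε (by linarith) hε
      · exact hdP _ (by rw [abs_neg, abs_of_pos hε])
      · apply hnotint
        rw [row_affine, hdot, hrow1]; ring
      · exact hdP _ (by rw [abs_of_pos hε])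
      · apply hnotint
        rw [row_affine, hdot, hrow1]; ring
    by_cases hall : ∀ i ∈ F, v i = x
    · obtain ⟨i, hi⟩ := hFne
      exact Or.inl ⟨i, (hall i hi) ▸ hxI, (hall i hi).symm⟩
    · push_neg at hall
      obtain ⟨ist, histF, hnex⟩ := hall
      set w : Fin n → ℝ := v ist - x with hwdef
      have hw : w ≠ 0 := sub_ne_zero.mpr hnex
      have hAdmw : Adm w := hAdmvx ist histF
      have hroww : ∑ j, A i₁ j * w j ≠ 0 := fun h => hw (hKK w hAdmw h)
      have hpar : ∀ d : Fin n → ℝ, Adm d →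
          d = ((∑ j, A i₁ j * d j) / (∑ j, A i₁ j * w j)) • w := by
        intro d hd
        have hd' : Adm ((∑ j, A i₁ j * d j) • w + (-(∑ j, A i₁ j * w j)) • d) :=
          hAdmadd _ _ (hAdmsmul _ _ hAdmw) (hAdmsmul _ _ hd)
        have hdot : ∑ j, A i₁ j *
            ((∑ jj, A i₁ jj * d jj) • w + (-(∑ jj, A i₁ jj * w jj)) • d) j = 0 := by
          rw [row_lin]; ring
        have hz := hKK _ hd' hdot
        have h5 : (∑ j, A i₁ j * w j) • d = (∑ j, A i₁ j * d j) • w := by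
          have h6 : (∑ j, A i₁ j * d j) • w - (∑ j, A i₁ j * w j) • d = 0 := by
            rw [← hz]; module
          have h7 := sub_eq_zero.mp h6
          exact h7.symm
        calc d = ((∑ j, A i₁ j * w j)⁻¹ * (∑ j, A i₁ j * w j)) • d := by
              rw [inv_mul_cancel₀ hroww, one_smul]
          _ = (∑ j, A i₁ j * w j)⁻¹ • ((∑ j, A i₁ j * w j) • d) := by rw [mul_smul]
          _ = (∑ j, A i₁ j * w j)⁻¹ • ((∑ j, A i₁ j * d j) • w) := by rw [h5]
          _ = ((∑ j, A i₁ j * d j) / (∑ j, A i₁ j * w j)) • w := by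
              rw [smul_smul, div_eq_inv_mul]
      set tt : V → ℝ :=
        fun i => (∑ j, A i₁ j * (v i - x) j) / (∑ j, A i₁ j * w j) with htt
      set cc : E → ℝ :=
        fun j' => (∑ j, A i₁ j * (r j') j) / (∑ j, A i₁ j * w j) with hcc
      have hvt : ∀ i ∈ F, v i = x + tt i • w := by
        intro i hi
        have h7 : v i - x = tt i • w := hpar _ (hAdmvx i hi)
        rw [← h7]
        abel
      have hrc : ∀ j ∈ G, r j = cc j • w := fun j hj => hpar _ (hAdmr j hj)
      have hsum0 : ∑ i ∈ F, lam i * tt i + ∑ j ∈ G, mus j * cc j = 0 := by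
        have hA' : ∑ i ∈ F, lam i • (x + tt i • w)
            = x + (∑ i ∈ F, lam i * tt i) • w := by
          have h8 : ∀ i ∈ F, lam i • (x + tt i • w) = lam i • x + (lam i * tt i) • w :=
            fun i _ => by rw [smul_add, smul_smul]
          rw [Finset.sum_congr rfl h8, Finset.sum_add_distrib, ← Finset.sum_smul,
            ← Finset.sum_smul, hlamF, one_smul]
        have hB : ∑ j ∈ G, mus j • (cc j • w) = (∑ j ∈ G, mus j * cc j) • w := by
          have h8 : ∀ j ∈ G, mus j • (cc j • w) = (mus j * cc j) • w :=
            fun j _ => smul_smul _ _ _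
          rw [Finset.sum_congr rfl h8, ← Finset.sum_smul]
        have hE1 : ∑ i ∈ F, lam i • v i = ∑ i ∈ F, lam i • (x + tt i • w) :=
          Finset.sum_congr rfl (fun i hi => by rw [hvt i hi])
        have hE2 : ∑ j ∈ G, mus j • r j = ∑ j ∈ G, mus j • (cc j • w) :=
          Finset.sum_congr rfl (fun j hj => by rw [hrc j hj])
        have h8 : x = x + (∑ i ∈ F, lam i * tt i + ∑ j ∈ G, mus j * cc j) • w := by
          conv_lhs => rw [hxrepF]
          rw [hE1, hE2, hA', hB, add_assoc, ← add_smul]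
        have h9 := left_eq_add.mp h8
        rcases smul_eq_zero.mp h9 with h | h
        · exact h
        · exact absurd h hw
      have hstar : ∀ θ₁ θ₂ : ℝ, θ₁ < 0 → 0 < θ₂ → x + θ₁ • w ∈ P →
          x + θ₁ • w ∉ interior L → x + θ₂ • w ∈ P → x + θ₂ • w ∉ interior L → False := by
        intro θ₁ θ₂ h1 h2 p1 i1 p2 i2
        exact hw (hmid w θ₁ θ₂ h1 h2 p1 i1 p2 i2)
      have hside : (∀ θ : ℝ, 0 ≤ θ → x + θ • w ∉ interior L) ∨
          (∀ θ : ℝ, θ ≤ 0 → x + θ • w ∉ interior L) := by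
        by_contra hcon
        push_neg at hcon
        obtain ⟨⟨θ₁, hθ₁, hI1⟩, ⟨θ₂, hθ₂, hI2⟩⟩ := hcon
        try simp only [not_not] at hI1 hI2
        apply hxI
        rcases eq_or_lt_of_le hθ₁ with h | h
        · rw [← h, zero_smul, add_zero] at hI1
          exact hI1
        rcases eq_or_lt_of_le hθ₂ with h2 | h2
        · rw [h2, zero_smul, add_zero] at hI2
          exact hI2
        have hd : (0:ℝ) < θ₁ - θ₂ := by linarith
        have hab1 : (-θ₂)/(θ₁-θ₂) + θ₁/(θ₁-θ₂) = 1 := by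
          rw [← add_div, show -θ₂ + θ₁ = θ₁ - θ₂ from by ring]
          exact div_self (ne_of_gt hd)
        have hxeq : x = ((-θ₂)/(θ₁-θ₂)) • (x + θ₁ • w) + (θ₁/(θ₁-θ₂)) • (x + θ₂ • w) := by
          rw [eq_comm]
          apply line_combo
          · exact hab1
          · field_simp
            ring
        rw [hxeq]
        exact (hLconv.interior) hI1 hI2 (div_nonneg (by linarith) hd.le)
          (div_nonneg h.le hd.le) hab1
      rcases hside with hAS | hAS2
      · exact help_line v r hLeq hlin hPconv hvP hPC hxP hxLmem hxI F G lam mus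
          hlamsupp (fun j hj => (hmusupp j hj).le) hlamF tt cc hvt hrc hsum0 hAS hstar
      · apply help_line v r hLeq hlin hPconv hvP hPC hxP hxLmem hxI (w := -w) F G lam mus
          hlamsupp (fun j hj => (hmusupp j hj).le) hlamF
          (fun i => -(tt i)) (fun j => -(cc j)) ?_ ?_ ?_ ?_ ?_
        · intro i hi
          rw [hvt i hi]
          module
        · intro j hj
          rw [hrc j hj]
          module
        · have h1 : ∑ i ∈ F, lam i * -tt i = -∑ i ∈ F, lam i * tt i := by
            rw [← Finset.sum_neg_distrib]
            exact Finset.sum_congr rfl fun i _ => by ring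
          have h2 : ∑ j ∈ G, mus j * -cc j = -∑ j ∈ G, mus j * cc j := by
            rw [← Finset.sum_neg_distrib]
            exact Finset.sum_congr rfl fun j _ => by ring
          rw [h1, h2]
          linarith [hsum0]
        · intro θ hθ
          have he : x + θ • (-w) = x + (-θ) • w := by module
          rw [he]
          exact hAS2 (-θ) (by linarith)
        · intro θ₁ θ₂ h1 h2 p1 i1 p2 i2
          have e1 : x + θ₁ • (-w) = x + (-θ₁) • w := by module
          have e2 : x + θ₂ • (-w) = x + (-θ₂) • w := by module
          rw [e1] at p1 i1
          rw [e2] at p2 i2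
          exact hstar (-θ₂) (-θ₁) (by linarith) (by linarith) p2 i2 p1 i1
  · -- x outside L
    have hAdmzero : ∀ d : Fin n → ℝ, Adm d → d = 0 := by
      intro d hd
      obtain ⟨ε, hε, hdP⟩ := hd
      have hclosed : IsClosed L := hLeq ▸ closed_poly A b
      have hcont : Continuous fun s : ℝ => x + s • d :=
        continuous_const.add (continuous_id.smul continuous_const)
      have hopen : IsOpen ((fun s : ℝ => x + s • d) ⁻¹' Lᶜ) :=
        hclosed.isOpen_compl.preimage hcont
      have h0 : (0:ℝ) ∈ (fun s : ℝ => x + s • d) ⁻¹' Lᶜ := by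
        simp only [Set.mem_preimage, zero_smul, add_zero]
        exact hxLmem
      obtain ⟨δ, hδ, hball⟩ := Metric.isOpen_iff.mp hopen 0 h0
      set ss : ℝ := min ε (δ/2) with hss
      have hsspos : 0 < ss := lt_min hε (by linarith)
      have hnotL : ∀ u : ℝ, |u| ≤ ss → x + u • d ∉ L := by
        intro u hu
        have h1 : u ∈ Metric.ball (0:ℝ) δ := by
          rw [Metric.mem_ball, Real.dist_eq, sub_zero]
          calc |u| ≤ ss := hu
            _ ≤ δ/2 := min_le_right _ _
            _ < δ := by linarith
        exact hball h1
      apply hmid d (-ss) ss (by linarith) hsspos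
      · exact hdP _ (by rw [abs_neg, abs_of_pos hsspos]; exact min_le_left _ _)
      · intro hint
        exact hnotL (-ss) (by rw [abs_neg, abs_of_pos hsspos]) (interior_subset hint)
      · exact hdP _ (by rw [abs_of_pos hsspos]; exact min_le_left _ _)
      · intro hint
        exact hnotL ss (by rw [abs_of_pos hsspos]) (interior_subset hint)
    obtain ⟨i, hi⟩ := hFne
    have h7 : v i - x = 0 := hAdmzero _ (hAdmvx i hi)
    have h8 : v i = x := sub_eq_zero.mp h7
    exact Or.inl ⟨i, h8 ▸ hxI, h8.symm⟩
end ExtremeForm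


end Stmt13Aux

open Stmt13Aux in
/-- Lemma `rel_descr` and Corollary `x_space_char`: characterization of the
vertices of `R(L,P)` and the decomposition
`R(L,P) = conv(∪_{i ∈ V^in(L)} R(L,P(e^i)))`. -/
theorem stmt13 {n : ℕ} {V E : Type*} [Fintype V] [Fintype E]
    (v : V → Fin n → ℝ) (r : E → Fin n → ℝ)
    (hvQ : ∀ i t, ∃ q : ℚ, v i t = (q : ℝ))
    (hrZ : ∀ j t, ∃ z : ℤ, r j t = (z : ℝ))
    (P : Set (Fin n → ℝ))
    (hP : P = convexHull ℝ (Set.range v) +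
      {d | ∃ μ : E → ℝ, (∀ j, 0 ≤ μ j) ∧ d = ∑ j, μ j • r j})
    (L : Set (Fin n → ℝ)) (hpoly : IsPolyhedron L)
    (hlin : ∀ d : Fin n → ℝ, (∀ x ∈ L, ∀ t : ℝ, 0 ≤ t → x + t • d ∈ L) →
      ∀ x ∈ L, ∀ t : ℝ, 0 ≤ t → x - t • d ∈ L)
    (hVin : ∃ i, v i ∈ interior L) :
    (∀ x ∈ Set.extremePoints ℝ (convexHull ℝ {y ∈ P | y ∉ interior L}),
      (∃ k, v k ∉ interior L ∧ x = v k) ∨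
      (∃ i k, v i ∈ interior L ∧ v k ∉ interior L ∧
        x = v i + sSup {β : ℝ | v i + β • (v k - v i) ∈ L} • (v k - v i)) ∨
      (∃ i j, v i ∈ interior L ∧ BddAbove {α : ℝ | 0 ≤ α ∧ v i + α • r j ∈ L} ∧
        x = v i + sSup {α : ℝ | 0 ≤ α ∧ v i + α • r j ∈ L} • r j)) ∧
    convexHull ℝ {y ∈ P | y ∉ interior L} =
      convexHull ℝ (⋃ i ∈ {i : V | v i ∈ interior L},
        convexHull ℝ {y ∈ (convexHull ℝ (insert (v i) (v '' {k | v k ∉ interior L})) +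
            {d | ∃ μ : E → ℝ, (∀ j, 0 ≤ μ j) ∧ d = ∑ j, μ j • r j}) |
          y ∉ interior L}) := by
  classical
  obtain ⟨m, A, b, hLeq⟩ := hpoly
  have hP' : P = hullCone r (Set.range v) := hP
  have hLconv : Convex ℝ L := hLeq ▸ convex_poly A b
  constructor
  · intro x hx
    exact extreme_form v r hLeq hlin hP' hx
  · apply Set.Subset.antisymm
    · apply convexHull_min ?_ (convex_convexHull ℝ _)
      intro y hy
      obtain ⟨hyP, hyL⟩ := hy
      obtain ⟨lam, mus, hlamnn, hmunn, hlam1, hyrep⟩ :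
          ∃ (lam : V → ℝ) (mus : E → ℝ), (∀ i, 0 ≤ lam i) ∧ (∀ j, 0 ≤ mus j) ∧
            (∑ i, lam i = 1) ∧ y = ∑ i, lam i • v i + ∑ j, mus j • r j := by
        have h0 := hP' ▸ hyP
        obtain ⟨a, ha, cc, hcc, hsum⟩ := h0
        obtain ⟨lam, hlamnn, hlam1, harep⟩ := (mem_hull_range_iff v a).mp ha
        obtain ⟨mus, hmunn, hcrep⟩ := hcc
        exact ⟨lam, mus, hlamnn, hmunn, hlam1, by rw [← hsum, harep, hcrep]⟩
      have hy' := mem_hull_union v r hLconv hVin lam mus hlamnn hmunn hlam1 hyrep hyL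
      have hmono : (⋃ i ∈ {i : V | v i ∈ interior L},
          {p ∈ hullCone r (insert (v i) (v '' {k | v k ∉ interior L})) |
            p ∉ interior L}) ⊆
          (⋃ i ∈ {i : V | v i ∈ interior L}, convexHull ℝ
            {p ∈ hullCone r (insert (v i) (v '' {k | v k ∉ interior L})) |
              p ∉ interior L}) :=
        Set.iUnion₂_mono fun i _ => subset_convexHull ℝ _
      exact convexHull_mono hmono hy'
    · apply convexHull_min ?_ (convex_convexHull ℝ _)
      intro y hy
      rw [Set.mem_iUnion₂] at hy
      obtain ⟨i, _, hyi⟩ := hy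
      have hsub : {p ∈ hullCone r (insert (v i) (v '' {k | v k ∉ interior L})) |
          p ∉ interior L} ⊆ {y ∈ P | y ∉ interior L} := by
        intro p hp
        refine ⟨?_, hp.2⟩
        rw [hP']
        refine hullCone_mono r ?_ hp.1
        intro q hq
        rcases Set.mem_insert_iff.mp hq with h | h
        · exact h ▸ ⟨i, rfl⟩
        · obtain ⟨k, _, hk⟩ := h
          exact hk ▸ ⟨k, rfl⟩
      exact convexHull_mono hsub hyi
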